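/- With x_{0,l} as above (x_{0,0}=0), the first-moment sum A₀ := ∑_{l=0}^∞ x_{0,l}(l + β₂/α₂) converges whenever β₁ + 1 > α₂ and equals (r/(β₁+1−α₂))·(1 + β₂/α₂). -/

import Mathlib

open Real Filter

/-- Gamma ratio bound from log-convexity: `Γ u / Γ (u+t) ≤ (u-1)^(-t)` for `u > 1`, `t > 0`. -/
lemma Gamma_ratio_le_aux (u t : ℝ) (hu : 1 < u) (ht : 0 < t) :
    Real.Gamma u / Real.Gamma (u + t) ≤ (u - 1) ^ (-t) := by
  have hw : 0 < u - 1 := by linarith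
  have hA : 0 < Real.Gamma u := Real.Gamma_pos_of_pos (by linarith)
  have hC : 0 < Real.Gamma (u + t) := Real.Gamma_pos_of_pos (by linarith)
  set θ : ℝ := t / (1 + t) with hθdef
  have h1t : (0:ℝ) < 1 + t := by linarith
  have hθ : 0 < θ := div_pos ht h1t
  have hθ1 : θ < 1 := by
    rw [hθdef, div_lt_one h1t]; linarith
  have hθ' : 0 < 1 - θ := by linarith
  have hab : θ + (1 - θ) = 1 := by ring
  have key := Real.Gamma_mul_add_mul_le_rpow_Gamma_mul_rpow_Gamma
    (s := u - 1) (t := u + t) hw (by linarith) hθ hθ' hab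
  have hcomb : θ * (u - 1) + (1 - θ) * (u + t) = u := by
    rw [hθdef]; field_simp; ring
  rw [hcomb] at key
  have hGm1 : Real.Gamma (u - 1) = Real.Gamma u / (u - 1) := by
    have := Real.Gamma_add_one (ne_of_gt hw)
    rw [show u - 1 + 1 = u by ring] at this
    field_simp [this]
    exact this.symm
  rw [hGm1, Real.div_rpow hA.le hw.le] at key
  -- key : Γ u ≤ Γ u ^ θ / (u-1) ^ θ * Γ (u+t) ^ (1-θ)
  have hAsplit : Real.Gamma u = Real.Gamma u ^ θ * Real.Gamma u ^ (1 - θ) := by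
    rw [← Real.rpow_add hA, hab, Real.rpow_one]
  have hwθ0 : 0 < (u - 1) ^ θ := Real.rpow_pos_of_pos hw θ
  have key2 : Real.Gamma u ^ (1 - θ) ≤ Real.Gamma (u + t) ^ (1 - θ) / (u - 1) ^ θ := by
    have hpos : 0 < Real.Gamma u ^ θ := Real.rpow_pos_of_pos hA θ
    calc Real.Gamma u ^ (1 - θ) = Real.Gamma u / Real.Gamma u ^ θ := by
          rw [Real.rpow_sub hA, Real.rpow_one]
      _ ≤ (Real.Gamma u ^ θ / (u - 1) ^ θ * Real.Gamma (u + t) ^ (1 - θ)) / Real.Gamma u ^ θ := by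
          gcongr
      _ = Real.Gamma (u + t) ^ (1 - θ) / (u - 1) ^ θ := by
          field_simp
  -- raise both sides to power (1+t)
  have hwθ : 0 < (u - 1) ^ θ := Real.rpow_pos_of_pos hw θ
  have hCθ : 0 ≤ Real.Gamma (u + t) ^ (1 - θ) := (Real.rpow_pos_of_pos hC _).le
  have key3 : (Real.Gamma u ^ (1 - θ)) ^ (1 + t)
      ≤ (Real.Gamma (u + t) ^ (1 - θ) / (u - 1) ^ θ) ^ (1 + t) :=
    Real.rpow_le_rpow (Real.rpow_pos_of_pos hA _).le key2 (by linarith)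
  have e1 : (Real.Gamma u ^ (1 - θ)) ^ (1 + t) = Real.Gamma u := by
    rw [← Real.rpow_mul hA.le]
    rw [show (1 - θ) * (1 + t) = 1 by rw [hθdef]; field_simp; ring]
    exact Real.rpow_one _
  have e2 : (Real.Gamma (u + t) ^ (1 - θ) / (u - 1) ^ θ) ^ (1 + t)
      = Real.Gamma (u + t) / (u - 1) ^ t := by
    rw [Real.div_rpow hCθ hwθ.le, ← Real.rpow_mul hC.le, ← Real.rpow_mul hw.le]
    rw [show (1 - θ) * (1 + t) = 1 by rw [hθdef]; field_simp; ring]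
    rw [show θ * (1 + t) = t by rw [hθdef]; field_simp]
    rw [Real.rpow_one]
  rw [e1, e2] at key3
  rw [div_le_iff₀ hC, Real.rpow_neg hw.le]
  exact key3.trans_eq (by rw [div_eq_mul_inv, mul_comm])

theorem first_moment_A0 (α₂ β₁ β₂ r : ℝ) (hα₂ : 0 < α₂) (hβ₁ : 0 < β₁) (hβ₂ : 0 < β₂)
    (hr : 0 < r) (hcond : β₁ + 1 > α₂) (x : ℕ → ℝ) (hx0 : x 0 = 0)
    (hx : ∀ l : ℕ, 1 ≤ l →
      x l = (r / α₂) *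
        (Real.Gamma (1 + (β₁ + β₂ + 1) / α₂) / Real.Gamma (1 + β₂ / α₂)) *
        (Real.Gamma ((l : ℝ) + β₂ / α₂) /
          Real.Gamma ((l : ℝ) + (α₂ + (β₁ + β₂) + 1) / α₂))) :
    HasSum (fun l : ℕ => x l * ((l : ℝ) + β₂ / α₂))
      ((r / (β₁ + 1 - α₂)) * (1 + β₂ / α₂)) := by
  set c : ℝ := β₂ / α₂ with hcdef
  set s : ℝ := (β₁ + 1) / α₂ with hsdef
  have hc : 0 < c := div_pos hβ₂ hα₂
  have hs1 : 1 < s := by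
    rw [hsdef, lt_div_iff₀ hα₂, one_mul]; linarith
  have hcs : (β₁ + β₂ + 1) / α₂ = c + s := by
    rw [hcdef, hsdef]; field_simp; ring
  have hcs' : (α₂ + (β₁ + β₂) + 1) / α₂ = 1 + c + s := by
    rw [hcdef, hsdef]; field_simp; ring
  set K : ℝ := (r / α₂) * (Real.Gamma (1 + c + s) / Real.Gamma (1 + c)) with hKdef
  have hΓ1c : 0 < Real.Gamma (1 + c) := Real.Gamma_pos_of_pos (by linarith)
  have hΓ1cs : 0 < Real.Gamma (1 + c + s) := Real.Gamma_pos_of_pos (by linarith)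
  have hK : 0 < K := by
    apply mul_pos (div_pos hr hα₂) (div_pos hΓ1cs hΓ1c)
  set D : ℝ := K / (s - 1) with hDdef
  have hD : 0 < D := div_pos hK (by linarith)
  set g : ℕ → ℝ := fun n =>
    D * (Real.Gamma ((n : ℝ) + 1 + c) / Real.Gamma ((n : ℝ) + c + s)) with hgdef
  set f : ℕ → ℝ := fun l => x l * ((l : ℝ) + c) with hfdef
  -- positivity of terms
  have hxl : ∀ l : ℕ, 1 ≤ l → x l = K * (Real.Gamma ((l : ℝ) + c)
      / Real.Gamma ((l : ℝ) + 1 + c + s)) := by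
    intro l hl
    rw [hx l hl, hKdef, hcs, hcs']
    ring_nf
  have hfnonneg : ∀ l, 0 ≤ f l := by
    intro l
    rcases Nat.eq_zero_or_pos l with h | h
    · simp [hfdef, h, hx0]
    · simp only [hfdef]
      have h1 : (0:ℝ) < (l : ℝ) + c := by positivity
      have h2 : 0 < Real.Gamma ((l : ℝ) + c) := Real.Gamma_pos_of_pos h1
      have h3 : 0 < Real.Gamma ((l : ℝ) + 1 + c + s) :=
        Real.Gamma_pos_of_pos (by linarith)
      rw [hxl l h]
      positivity
  -- telescoping identity
  have hfg : ∀ l : ℕ, 1 ≤ l → f l = g l - g (l + 1) := by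
    intro l hl
    have hlc : (0:ℝ) < (l : ℝ) + c := by positivity
    have hlcs : (0:ℝ) < (l : ℝ) + c + s := by linarith
    have G1 : 0 < Real.Gamma ((l : ℝ) + c) := Real.Gamma_pos_of_pos hlc
    have G2 : 0 < Real.Gamma ((l : ℝ) + c + s) := Real.Gamma_pos_of_pos hlcs
    have e1 : Real.Gamma ((l : ℝ) + 1 + c) = ((l : ℝ) + c) * Real.Gamma ((l : ℝ) + c) := by
      rw [show (l : ℝ) + 1 + c = ((l : ℝ) + c) + 1 by ring, Real.Gamma_add_one (ne_of_gt hlc)]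
    have e2 : Real.Gamma ((l : ℝ) + 1 + c + s)
        = ((l : ℝ) + c + s) * Real.Gamma ((l : ℝ) + c + s) := by
      rw [show (l : ℝ) + 1 + c + s = ((l : ℝ) + c + s) + 1 by ring,
        Real.Gamma_add_one (ne_of_gt hlcs)]
    have e3 : Real.Gamma ((l : ℝ) + 2 + c)
        = ((l : ℝ) + 1 + c) * (((l : ℝ) + c) * Real.Gamma ((l : ℝ) + c)) := by
      rw [show (l : ℝ) + 2 + c = ((l : ℝ) + 1 + c) + 1 by ring,
        Real.Gamma_add_one (by positivity), e1]
    simp only [hfdef, hgdef]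
    rw [hxl l hl]
    push_cast
    rw [show (l : ℝ) + 1 + 1 + c = (l : ℝ) + 2 + c by ring,
      show (l : ℝ) + 1 + c + s = (l : ℝ) + 1 + c + s by ring]
    rw [e1, e2, e3, hDdef]
    have hs1' : s - 1 ≠ 0 := sub_ne_zero.mpr (ne_of_gt hs1)
    field_simp
    ring
  -- partial sums
  have hf0 : f 0 = 0 := by simp [hfdef, hx0]
  have hP : ∀ n : ℕ, ∑ i ∈ Finset.range (n + 1), f i = g 1 - g (n + 1) := by
    intro n
    induction n with
    | zero => simp [hf0]
    | succ n ih =>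
      rw [Finset.sum_range_succ, ih, hfg (n + 1) (Nat.le_add_left 1 n)]
      ring
  -- tail tends to zero
  have htail : Tendsto g atTop (nhds 0) := by
    have ht : 0 < s - 1 := by linarith
    have hlb : ∀ n : ℕ, 0 ≤ g n := by
      intro n
      have h1 : (0:ℝ) < (n : ℝ) + 1 + c := by positivity
      have h2 : (0:ℝ) < (n : ℝ) + c + s := by positivity
      exact le_of_lt (mul_pos hD (div_pos (Real.Gamma_pos_of_pos h1) (Real.Gamma_pos_of_pos h2)))
    have hub : ∀ n : ℕ, g n ≤ D * ((n : ℝ) + c) ^ (-(s - 1)) := by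
      intro n
      have hb := Gamma_ratio_le_aux ((n : ℝ) + 1 + c) (s - 1)
        (by have hn : (0:ℝ) ≤ (n : ℝ) := Nat.cast_nonneg n; linarith) ht
      rw [show (n : ℝ) + 1 + c + (s - 1) = (n : ℝ) + c + s by ring,
        show (n : ℝ) + 1 + c - 1 = (n : ℝ) + c by ring] at hb
      exact mul_le_mul_of_nonneg_left hb hD.le
    have hlim : Tendsto (fun n : ℕ => D * ((n : ℝ) + c) ^ (-(s - 1))) atTop (nhds 0) := by
      have h1 : Tendsto (fun n : ℕ => (n : ℝ) + c) atTop atTop :=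
        tendsto_atTop_add_const_right atTop c tendsto_natCast_atTop_atTop
      rw [show (0:ℝ) = D * 0 by ring]
      exact ((tendsto_rpow_neg_atTop ht).comp h1).const_mul D
    exact squeeze_zero hlb hub hlim
  -- value of g 1
  have hg1 : g 1 = (r / (β₁ + 1 - α₂)) * (1 + c) := by
    simp only [hgdef]
    push_cast
    rw [show (1:ℝ) + 1 + c = (1 + c) + 1 by ring, Real.Gamma_add_one (by positivity)]
    rw [hDdef, hKdef]
    have h1 : β₁ + 1 - α₂ ≠ 0 := by intro h; linarith
    have h2 : s - 1 ≠ 0 := sub_ne_zero.mpr (ne_of_gt hs1)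
    have h3 : s - 1 = (β₁ + 1 - α₂) / α₂ := by rw [hsdef]; field_simp
    rw [h3]
    field_simp
  -- assemble
  have hnn : ∀ l, 0 ≤ x l * ((l : ℝ) + β₂ / α₂) := by
    intro l; have := hfnonneg l; rwa [hfdef] at this
  rw [hasSum_iff_tendsto_nat_of_nonneg hnn]
  rw [show (fun n : ℕ => ∑ i ∈ Finset.range n, x i * ((i : ℝ) + β₂ / α₂))
      = (fun n : ℕ => ∑ i ∈ Finset.range n, f i) by simp [hfdef]; rfl]
  rw [← tendsto_add_atTop_iff_nat 1]
  have h0 : Tendsto (fun n : ℕ => g (n + 1)) atTop (nhds 0) :=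
    htail.comp (tendsto_add_atTop_nat 1)
  have htend := (tendsto_const_nhds (x := g 1) (f := atTop (α := ℕ))).sub h0
  rw [sub_zero] at htend
  have final := htend.congr (fun n => (hP n).symm)
  rw [hg1] at final
  exact final
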